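/- Let Q : ℝⁿ → ℝ be continuous with Q(0) = 0, Q > 0 on S \ {0}, and suppose the descent condition max_{closedBall γᵢ ε} Q − min_{closedBall γ_{i−1} ε} Q ≤ −η(‖γ_{i−1}‖) holds along an infinite sequence of way-points (γᵢ) in a compact set S̄, for a class-𝒦 function η. Then ‖γᵢ‖ → 0: the way-point sequence converges to the origin. -/

import Mathlib

open Metric Set Filter

/-- Limiting version of the convergence proposition: under the way-point descent
condition along an infinite sequence of way-points in the compact closure of a
bounded open set `S ∋ 0`, with `Q` continuous and positive definite and `η`
class-𝒦, the way-points converge to the origin: `‖γᵢ‖ → 0`. -/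
theorem stmt_19 (n : ℕ) (S : Set (EuclideanSpace ℝ (Fin n)))
    (hSopen : IsOpen S) (hSbdd : Bornology.IsBounded S)
    (h0S : (0 : EuclideanSpace ℝ (Fin n)) ∈ S)
    (Q : EuclideanSpace ℝ (Fin n) → ℝ) (hQcont : Continuous Q)
    (hQ0 : Q 0 = 0) (hQpos : ∀ q ∈ closure S, q ≠ 0 → 0 < Q q)
    (η : ℝ → ℝ) (hηcont : Continuous η) (hηmono : StrictMono η) (hη0 : η 0 = 0)
    (ε : ℝ) (hε : 0 < ε)
    (γ : ℕ → EuclideanSpace ℝ (Fin n)) (hγS : ∀ i, γ i ∈ S)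
    (hballs : ∀ i, closedBall (γ i) ε ⊆ closure S)
    (hdescent : ∀ i : ℕ,
      sSup (Q '' closedBall (γ (i + 1)) ε) - sInf (Q '' closedBall (γ i) ε)
        ≤ -η ‖γ i‖) :
    Tendsto (fun i => ‖γ i‖) atTop (nhds 0) := by
  set M : ℕ → ℝ := fun i => sSup (Q '' closedBall (γ i) ε) with hM
  set m : ℕ → ℝ := fun i => sInf (Q '' closedBall (γ i) ε) with hm
  have hcomp : ∀ i, IsCompact (Q '' closedBall (γ i) ε) := fun i =>
    (isCompact_closedBall _ _).image hQcont
  have hne : ∀ i, (Q '' closedBall (γ i) ε).Nonempty := fun i =>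
    ⟨Q (γ i), mem_image_of_mem _ (mem_closedBall_self hε.le)⟩
  have hQnonneg : ∀ i, ∀ x ∈ Q '' closedBall (γ i) ε, 0 ≤ x := by
    rintro i x ⟨q, hq, rfl⟩
    rcases eq_or_ne q 0 with rfl | hq0
    · simp [hQ0]
    · exact (hQpos q (hballs i hq) hq0).le
  have hm_nonneg : ∀ i, 0 ≤ m i := fun i => le_csInf (hne i) (hQnonneg i)
  have hmM : ∀ i, m i ≤ M i := fun i =>
    csInf_le_csSup (hne i) (hcomp i).bddBelow (hcomp i).bddAbove
  have ha_nonneg : ∀ i, 0 ≤ η ‖γ i‖ := fun i => by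
    rw [← hη0]; exact hηmono.monotone (norm_nonneg _)
  have hMstep : ∀ i, M (i + 1) + η ‖γ i‖ ≤ M i := fun i => by
    have := hdescent i
    have := hmM i
    simp only [hM, hm] at *
    linarith
  have hManti : Antitone M := antitone_nat_of_succ_le fun i => by
    linarith [hMstep i, ha_nonneg i]
  have hMnonneg : ∀ i, 0 ≤ M i := fun i => le_trans (hm_nonneg i) (hmM i)
  obtain ⟨L, hL⟩ : ∃ L, Tendsto M atTop (nhds L) :=
    ⟨_, tendsto_atTop_ciInf hManti ⟨0, by rintro x ⟨i, rfl⟩; exact hMnonneg i⟩⟩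
  have haeta : Tendsto (fun i => η ‖γ i‖) atTop (nhds 0) := by
    have h1 : Tendsto (fun i => M i - M (i + 1)) atTop (nhds 0) := by
      have := hL.sub (hL.comp (tendsto_add_atTop_nat 1))
      simpa using this
    exact squeeze_zero ha_nonneg (fun i => by linarith [hMstep i]) h1
  rw [Metric.tendsto_atTop]
  intro δ hδ
  have hηδ : 0 < η δ := by rw [← hη0]; exact hηmono hδ
  obtain ⟨N, hN⟩ := (Metric.tendsto_atTop.mp haeta) (η δ) hηδ
  refine ⟨N, fun k hk => ?_⟩
  have h2 := hN k hk
  rw [Real.dist_eq, sub_zero, abs_of_nonneg (ha_nonneg k)] at h2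
  rw [Real.dist_eq, sub_zero, abs_of_nonneg (norm_nonneg _)]
  exact hηmono.lt_iff_lt.mp h2
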